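/- There is no positive integer N satisfying σ_∞(σ_∞(N)) = 2N with σ_∞(N) = 2^f q, where q is an odd prime and f > 1. -/

import Mathlib

/-- The sum of infinitary divisors of `n`: for `n = ∏ p ^ e_p`, it equals
`∏_p ∏_{j : bit j of e_p is 1} (p ^ 2 ^ j + 1)`. -/
def infsigma (n : ℕ) : ℕ :=
  n.factorization.prod fun p e =>
    ∏ j ∈ Finset.range e, if e.testBit j then p ^ 2 ^ j + 1 else 1

namespace InfSigmaAux

def g (p e : ℕ) : ℕ := ∏ j ∈ Finset.range e, if e.testBit j then p ^ 2 ^ j + 1 else 1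

lemma g_pos (p e : ℕ) : 0 < g p e := by
  apply Finset.prod_pos; intro j _; split <;> positivity

lemma infsigma_eq (n : ℕ) : infsigma n = ∏ p ∈ n.primeFactors, g p (n.factorization p) := by
  rw [infsigma, Finsupp.prod, Nat.support_factorization]; rfl

lemma infsigma_pos (n : ℕ) : 0 < infsigma n := by
  rw [infsigma_eq]; exact Finset.prod_pos (fun p _ => g_pos p _)

lemma testBit_lt {e j : ℕ} (h : e.testBit j) : j < e :=
  lt_of_lt_of_le (Nat.lt_two_pow_self (n := j)) (Nat.ge_two_pow_of_testBit h)

lemma dvd_g {p e j : ℕ} (h : e.testBit j) : p ^ 2 ^ j + 1 ∣ g p e := by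
  have hj : j ∈ Finset.range e := Finset.mem_range.2 (testBit_lt h)
  have := Finset.dvd_prod_of_mem (fun j => if e.testBit j then p ^ 2 ^ j + 1 else 1) hj
  simpa [h, g] using this

lemma g_dvd_infsigma {n p : ℕ} (hp : p ∈ n.primeFactors) :
    g p (n.factorization p) ∣ infsigma n := by
  rw [infsigma_eq]
  exact Finset.dvd_prod_of_mem _ hp

lemma infsigma_mul_coprime {a b : ℕ} (ha : a ≠ 0) (hb : b ≠ 0) (hab : Nat.Coprime a b) :
    infsigma (a * b) = infsigma a * infsigma b := by
  unfold infsigma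
  rw [Nat.factorization_mul ha hb]
  exact Finsupp.prod_add_index_of_disjoint
    (by simpa [Nat.support_factorization] using Nat.Coprime.disjoint_primeFactors hab) _

lemma infsigma_prime_pow {p : ℕ} (hp : p.Prime) (e : ℕ) : infsigma (p ^ e) = g p e := by
  unfold infsigma
  rw [hp.factorization_pow]
  exact Finsupp.prod_single_index (by simp [g])

lemma infsigma_prime {p : ℕ} (hp : p.Prime) : infsigma p = p + 1 := by
  have := infsigma_prime_pow hp 1
  rw [pow_one] at this
  rw [this]
  simp [g]

lemma r_ne_two {j0 r : ℕ} (hdvd : r ∣ 2 ^ 2 ^ j0 + 1) : r ≠ 2 := by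
  rintro rfl
  have h2 : 2 ∣ 2 ^ 2 ^ j0 := dvd_pow_self 2 (Nat.pos_of_ne_zero (by positivity)).ne'
  omega

lemma order_two {j0 r : ℕ} (hr : r.Prime) (hdvd : r ∣ 2 ^ 2 ^ j0 + 1) :
    orderOf (2 : ZMod r) = 2 ^ (j0 + 1) := by
  haveI : Fact r.Prime := ⟨hr⟩
  have hr2 : 2 < r := lt_of_le_of_ne hr.two_le (Ne.symm (r_ne_two hdvd))
  haveI : Fact (2 < r) := ⟨hr2⟩
  have hx : (2 : ZMod r) ^ 2 ^ j0 = -1 := by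
    have h0 : ((2 ^ 2 ^ j0 + 1 : ℕ) : ZMod r) = 0 :=
      (ZMod.natCast_eq_zero_iff _ _).2 hdvd
    push_cast at h0
    linear_combination h0
  have hx2 : (2 : ZMod r) ^ 2 ^ (j0 + 1) = 1 := by
    rw [pow_succ, pow_mul, hx]; ring
  have hdvd1 : orderOf (2 : ZMod r) ∣ 2 ^ (j0 + 1) := orderOf_dvd_of_pow_eq_one hx2
  have hndvd : ¬ orderOf (2 : ZMod r) ∣ 2 ^ j0 := by
    intro h
    have := orderOf_dvd_iff_pow_eq_one.1 h
    rw [hx] at this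
    exact ZMod.neg_one_ne_one this
  rcases (Nat.dvd_prime_pow Nat.prime_two).1 hdvd1 with ⟨i, hi, he⟩
  have hij : i = j0 + 1 := by
    by_contra hne
    exact hndvd (he ▸ pow_dvd_pow 2 (by omega))
  rw [he, hij]

lemma no_mersenne {j0 r s : ℕ} (hj0 : j0 ≠ 0) (hr : r.Prime) (hdvd : r ∣ 2 ^ 2 ^ j0 + 1)
    (hm : r + 1 = 2 ^ s) : False := by
  haveI : Fact r.Prime := ⟨hr⟩
  have h1 : (2 : ZMod r) ^ s = 1 := by
    have h0 : ((2 ^ s : ℕ) : ZMod r) = ((r + 1 : ℕ) : ZMod r) := by rw [hm]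
    push_cast at h0
    rw [h0, ZMod.natCast_self]; ring
  have hd : 2 ^ (j0 + 1) ∣ s := order_two hr hdvd ▸ orderOf_dvd_of_pow_eq_one h1
  have hs0 : s ≠ 0 := by rintro rfl; have := hr.two_le; omega
  have hsle : 2 ^ (j0 + 1) ≤ s := Nat.le_of_dvd (Nat.pos_of_ne_zero hs0) hd
  have hrle : r ≤ 2 ^ 2 ^ j0 + 1 := Nat.le_of_dvd (by positivity) hdvd
  have hX : 4 ≤ 2 ^ 2 ^ j0 := by
    calc (4:ℕ) = 2 ^ 2 := by norm_num
      _ ≤ 2 ^ 2 ^ j0 := Nat.pow_le_pow_right (by norm_num) (by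
          calc 2 = 2 ^ 1 := rfl
          _ ≤ 2 ^ j0 := Nat.pow_le_pow_right (by norm_num) (by omega))
  have key : 2 ^ 2 ^ (j0 + 1) ≤ 2 ^ s := Nat.pow_le_pow_right (by norm_num) hsle
  have hsq : 2 ^ 2 ^ (j0 + 1) = (2 ^ 2 ^ j0) * (2 ^ 2 ^ j0) := by
    rw [← pow_add]; congr 1; rw [pow_succ]; ring
  nlinarith [hm, hrle]

lemma r_one_mod_four {j0 r : ℕ} (hj0 : j0 ≠ 0) (hr : r.Prime) (hdvd : r ∣ 2 ^ 2 ^ j0 + 1) :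
    r % 4 = 1 := by
  haveI : Fact r.Prime := ⟨hr⟩
  have hr2 : 2 < r := lt_of_le_of_ne hr.two_le (Ne.symm (r_ne_two hdvd))
  have hne : (2 : ZMod r) ≠ 0 := by
    intro h
    have h' := (ZMod.natCast_eq_zero_iff 2 r).1 (by exact_mod_cast h)
    have := Nat.le_of_dvd (by norm_num) h'
    omega
  have hfl : (2 : ZMod r) ^ (r - 1) = 1 := ZMod.pow_card_sub_one_eq_one hne
  have hdvd2 : 2 ^ (j0 + 1) ∣ r - 1 := order_two hr hdvd ▸ orderOf_dvd_of_pow_eq_one hfl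
  have h4 : (4:ℕ) ∣ r - 1 := dvd_trans (by
    have h44 : (4:ℕ) = 2 ^ 2 := by norm_num
    rw [h44]; exact pow_dvd_pow 2 (by omega)) hdvd2
  omega

lemma vq_prod {α : Type*} {S : Finset α} {h : α → ℕ} (q : ℕ) (hS : ∀ x ∈ S, h x ≠ 0) :
    (∏ x ∈ S, h x).factorization q = ∑ x ∈ S, (h x).factorization q := by
  rw [Nat.factorization_prod hS]
  exact Finset.sum_apply' q

lemma vq_g (q p e : ℕ) :
    (g p e).factorization q =
      ∑ j ∈ Finset.range e, ((if e.testBit j then p ^ 2 ^ j + 1 else 1).factorization q) := by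
  apply vq_prod
  intro j _
  split <;> positivity

lemma inner_ge_one {q p e j : ℕ} (hq : q.Prime) (hb : e.testBit j) (hd : q ∣ p ^ 2 ^ j + 1) :
    1 ≤ ∑ i ∈ Finset.range e, ((if e.testBit i then p ^ 2 ^ i + 1 else 1).factorization q) := by
  have hj : j ∈ Finset.range e := Finset.mem_range.2 (testBit_lt hb)
  refine le_trans ?_ (Finset.single_le_sum (fun i _ => Nat.zero_le _) hj)
  rw [if_pos hb]
  exact hq.factorization_pos_of_dvd (by positivity) hd

lemma inner_ge_two {q p e j1 j2 : ℕ} (hq : q.Prime) (hne : j1 ≠ j2)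
    (hb1 : e.testBit j1) (hb2 : e.testBit j2)
    (hd1 : q ∣ p ^ 2 ^ j1 + 1) (hd2 : q ∣ p ^ 2 ^ j2 + 1) :
    2 ≤ ∑ i ∈ Finset.range e, ((if e.testBit i then p ^ 2 ^ i + 1 else 1).factorization q) := by
  have hsub : {j1, j2} ⊆ Finset.range e := by
    intro i hi
    simp only [Finset.mem_insert, Finset.mem_singleton] at hi
    rcases hi with rfl | rfl
    · exact Finset.mem_range.2 (testBit_lt hb1)
    · exact Finset.mem_range.2 (testBit_lt hb2)
  refine le_trans ?_ (Finset.sum_le_sum_of_subset hsub)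
  rw [Finset.sum_insert (by simpa using hne), Finset.sum_singleton, if_pos hb1, if_pos hb2]
  have h1 := hq.factorization_pos_of_dvd (show p ^ 2 ^ j1 + 1 ≠ 0 by positivity) hd1
  have h2 := hq.factorization_pos_of_dvd (show p ^ 2 ^ j2 + 1 ≠ 0 by positivity) hd2
  omega

lemma testBit_log {f : ℕ} (hf : f ≠ 0) : f.testBit (Nat.log 2 f) = true := by
  have h1 : 2 ^ Nat.log 2 f ≤ f := Nat.pow_log_le_self 2 hf
  have h2 : f < 2 ^ (Nat.log 2 f + 1) := Nat.lt_pow_succ_log_self (by norm_num) f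
  have hdiv : f / 2 ^ Nat.log 2 f = 1 := by
    apply Nat.div_eq_of_lt_le (by simpa using h1)
    rw [pow_succ] at h2
    omega
  simp [Nat.testBit_eq_decide_div_mod_eq, hdiv]

lemma fermat_dvd {a b : ℕ} (h : a < b) : 2 ^ 2 ^ a + 1 ∣ 2 ^ 2 ^ b - 1 := by
  have hx : 1 ≤ (2:ℕ) ^ 2 ^ a := Nat.one_le_two_pow
  have hsq : (2:ℕ) ^ 2 ^ (a+1) = 2 ^ 2 ^ a * 2 ^ 2 ^ a := by
    rw [← pow_add]; congr 1; rw [pow_succ]; ring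
  have h1 : (2 ^ 2 ^ a + 1) * (2 ^ 2 ^ a - 1) = 2 ^ 2 ^ (a+1) - 1 := by
    rcases Nat.exists_eq_add_of_le hx with ⟨y, hy⟩
    rw [hsq, hy]
    have e1 : (1 + y + 1) * (1 + y - 1) = y * y + 2 * y := by
      simp [Nat.add_sub_cancel]
      ring
    have e2 : (1 + y) * (1 + y) = y * y + 2 * y + 1 := by ring
    omega
  have e : ((2:ℕ) ^ 2 ^ (a+1)) ^ 2 ^ (b - (a+1)) = 2 ^ 2 ^ b := by
    rw [← pow_mul]
    congr 1
    rw [← pow_add]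
    congr 1
    omega
  have h2 := Nat.sub_dvd_pow_sub_pow ((2:ℕ) ^ 2 ^ (a+1)) 1 (2 ^ (b - (a+1)))
  rw [one_pow, e] at h2
  exact dvd_trans ⟨2 ^ 2 ^ a - 1, h1.symm⟩ h2

lemma fermat_not_dvd {j0 jb r : ℕ} (hr : r.Prime) (hne : jb ≠ j0)
    (h1 : r ∣ 2 ^ 2 ^ j0 + 1) (h2 : r ∣ 2 ^ 2 ^ jb + 1) : False := by
  have hr2 : r ≠ 2 := r_ne_two h1
  have hr3 : 3 ≤ r := by have := hr.two_le; omega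
  have hdvd2 : r ∣ 2 := by
    rcases Nat.lt_or_ge jb j0 with h | h
    · have hd : r ∣ 2 ^ 2 ^ j0 - 1 := h2.trans (fermat_dvd h)
      have hd2 := Nat.dvd_sub h1 hd
      have hx : 1 ≤ (2:ℕ) ^ 2 ^ j0 := Nat.one_le_two_pow
      have he : (2 ^ 2 ^ j0 + 1) - (2 ^ 2 ^ j0 - 1) = 2 := by omega
      rwa [he] at hd2
    · have h' : j0 < jb := by omega
      have hd : r ∣ 2 ^ 2 ^ jb - 1 := h1.trans (fermat_dvd h')
      have hd2 := Nat.dvd_sub h2 hd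
      have hx : 1 ≤ (2:ℕ) ^ 2 ^ jb := Nat.one_le_two_pow
      have he : (2 ^ 2 ^ jb + 1) - (2 ^ 2 ^ jb - 1) = 2 := by omega
      rwa [he] at hd2
  have := Nat.le_of_dvd (by norm_num) hdvd2
  omega

end InfSigmaAux

set_option maxHeartbeats 1000000 in
open InfSigmaAux in
theorem no_superperfect_infsigma_eq_two_pow_mul_prime :
    ¬ ∃ (N q f : ℕ), 0 < N ∧ q.Prime ∧ Odd q ∧ 1 < f ∧
      infsigma N = 2 ^ f * q ∧ infsigma (infsigma N) = 2 * N := by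
  rintro ⟨N, q, f, hN, hq, hqodd, hf, H1, H2⟩
  have hN0 : N ≠ 0 := hN.ne'
  have hq0 : q ≠ 0 := hq.pos.ne'
  have hq2 : q ≠ 2 := by
    rintro rfl
    rcases hqodd with ⟨k, hk⟩; omega
  have hqm2 : q % 2 = 1 := Nat.odd_iff.1 hqodd
  -- Step 1 : infsigma (2^f*q) = A * (q+1)
  set A := g 2 f with hA
  have hApos : 0 < A := g_pos 2 f
  have hcop : Nat.Coprime (2 ^ f) q :=
    Nat.Coprime.pow_left _ ((Nat.coprime_primes Nat.prime_two hq).2 (Ne.symm hq2))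
  have h2N : A * (q + 1) = 2 * N := by
    rw [← H2, H1, infsigma_mul_coprime (by positivity) hq0 hcop,
      infsigma_prime_pow Nat.prime_two, infsigma_prime hq]
  -- A odd
  have hAodd : ¬ 2 ∣ A := by
    intro h
    rcases (Nat.Prime.prime Nat.prime_two).exists_mem_finset_dvd h with ⟨jb, _, hjb⟩
    revert hjb
    split
    · intro h'
      have : (2:ℕ) ∣ 2 ^ 2 ^ jb := dvd_pow_self 2 (by positivity)
      omega
    · omega
  -- the top bit of f
  set j0 := Nat.log 2 f with hj0def
  have hj0ne : j0 ≠ 0 := by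
    have : 2 ^ 1 ≤ f := by omega
    have := (Nat.le_log_iff_pow_le (by norm_num) (by omega)).2 this
    omega
  have hbit0 : f.testBit j0 := testBit_log (by omega)
  set F := 2 ^ 2 ^ j0 + 1 with hFdef
  have hFA : F ∣ A := dvd_g hbit0
  have hF5 : 5 ≤ F := by
    have : (4:ℕ) ≤ 2 ^ 2 ^ j0 := by
      calc (4:ℕ) = 2 ^ 2 := by norm_num
        _ ≤ 2 ^ 2 ^ j0 := Nat.pow_le_pow_right (by norm_num) (by
            calc 2 = 2 ^ 1 := rfl
            _ ≤ 2 ^ j0 := Nat.pow_le_pow_right (by norm_num) (by omega))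
    omega
  have hFodd : ¬ 2 ∣ F := by
    have : (2:ℕ) ∣ 2 ^ 2 ^ j0 := dvd_pow_self 2 (by positivity)
    omega
  have hFN : F ∣ N := by
    have h1 : F ∣ 2 * N := by rw [← h2N]; exact hFA.trans (Dvd.intro _ rfl)
    exact (Nat.Coprime.dvd_of_dvd_mul_left (by
      rw [Nat.coprime_comm]
      exact Nat.coprime_two_left.2 (Nat.odd_iff.2 (by omega))) h1)
  -- key divisibility: every atomic factor coming from a prime divisor of F is divisible by q
  have key : ∀ r' j', r'.Prime → r' ∣ F → (N.factorization r').testBit j' →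
      q ∣ r' ^ 2 ^ j' + 1 := by
    intro r' j' hp' hdF hb
    have hr'N : r' ∣ N := hdF.trans hFN
    have hmem : r' ∈ N.primeFactors := Nat.mem_primeFactors.2 ⟨hp', hr'N, hN0⟩
    have hterm : r' ^ 2 ^ j' + 1 ∣ 2 ^ f * q := by
      rw [← H1]
      exact (dvd_g hb).trans (g_dvd_infsigma hmem)
    by_contra hnq
    have hcq : Nat.Coprime (r' ^ 2 ^ j' + 1) q :=
      Nat.coprime_comm.1 ((Nat.Prime.coprime_iff_not_dvd hq).2 hnq)
    have h2f : r' ^ 2 ^ j' + 1 ∣ 2 ^ f := hcq.dvd_of_dvd_mul_right hterm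
    obtain ⟨s, _, hs⟩ := (Nat.dvd_prime_pow Nat.prime_two).1 h2f
    rcases Nat.eq_zero_or_pos j' with rfl | hj'
    · rw [pow_zero, pow_one] at hs
      exact no_mersenne hj0ne hp' hdF hs
    · -- j' ≥ 1 : r'^2^j' + 1 ≡ 2 mod 4 but is a power of two ≥ 4
      have hr'2 : r' ≠ 2 := r_ne_two hdF
      have hr'3 : 3 ≤ r' := by have := hp'.two_le; omega
      set t := r' ^ 2 ^ (j' - 1) with htdef
      have ht3 : 3 ≤ t := le_trans hr'3 (Nat.le_self_pow (by positivity) r')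
      have htodd : t % 2 = 1 := by
        have : ¬ 2 ∣ t := by
          intro h
          have h2r : (2:ℕ) ∣ r' := Nat.Prime.dvd_of_dvd_pow Nat.prime_two (htdef ▸ h)
          rcases hp'.eq_one_or_self_of_dvd 2 h2r with h' | h' <;> omega
        omega
      have htsq : r' ^ 2 ^ j' = t * t := by
        rw [htdef, ← pow_add]
        congr 1
        have h2 : 2 ^ j' = 2 ^ (j' - 1) * 2 := by
          rw [← pow_succ]
          congr 1
          omega
        omega
      obtain ⟨k, hk⟩ : ∃ k, t = 2 * k + 1 := ⟨t / 2, by omega⟩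
      have hmod : r' ^ 2 ^ j' % 4 = 1 := by
        rw [htsq, hk]
        have : (2 * k + 1) * (2 * k + 1) = 4 * (k * k + k) + 1 := by ring
        omega
      -- now r'^2^j' + 1 = 2^s with value ≥ 10 hence 4 ∣ it, contradiction
      have hge : 10 ≤ r' ^ 2 ^ j' + 1 := by nlinarith [htsq, ht3]
      have hs2 : 2 ≤ s := by
        by_contra h
        interval_cases s <;> omega
      have h4 : (4:ℕ) ∣ r' ^ 2 ^ j' + 1 := by
        rw [hs]
        calc (4:ℕ) = 2 ^ 2 := by norm_num
          _ ∣ 2 ^ s := pow_dvd_pow 2 hs2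
      omega
  -- the q-valuation of infsigma N equals 1
  have hS : ∑ p ∈ N.primeFactors, ∑ i ∈ Finset.range (N.factorization p),
      ((if (N.factorization p).testBit i then p ^ 2 ^ i + 1 else 1).factorization q) = 1 := by
    have h1 : (infsigma N).factorization q = 1 := by
      rw [H1, Nat.factorization_mul (by positivity) hq0]
      have e1 : ((2:ℕ) ^ f).factorization q = 0 := by
        apply Nat.factorization_eq_zero_of_not_dvd
        intro h
        have h2 := hq.dvd_of_dvd_pow h
        have := Nat.le_of_dvd (by norm_num) h2
        have := hq.two_le
        omega
      have e2 : q.factorization q = 1 := Nat.Prime.factorization_self hq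
      rw [Finsupp.add_apply, e1, e2]
    rw [infsigma_eq, vq_prod q (fun p _ => (g_pos p _).ne')] at h1
    calc ∑ p ∈ N.primeFactors, ∑ i ∈ Finset.range (N.factorization p),
        ((if (N.factorization p).testBit i then p ^ 2 ^ i + 1 else 1).factorization q)
        = ∑ p ∈ N.primeFactors, (g p (N.factorization p)).factorization q :=
          Finset.sum_congr rfl (fun p _ => (vq_g q p _).symm)
      _ = 1 := h1
  -- uniqueness of the q-divisible atomic factor
  have huniq2 : ∀ p1 p2 j1 j2, p1 ∈ N.primeFactors → p2 ∈ N.primeFactors →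
      (N.factorization p1).testBit j1 → (N.factorization p2).testBit j2 →
      q ∣ p1 ^ 2 ^ j1 + 1 → q ∣ p2 ^ 2 ^ j2 + 1 → p1 = p2 := by
    intro p1 p2 j1 j2 hm1 hm2 hb1 hb2 hd1 hd2
    by_contra hne
    have hsub : {p1, p2} ⊆ N.primeFactors := by
      intro x hx
      simp only [Finset.mem_insert, Finset.mem_singleton] at hx
      rcases hx with rfl | rfl <;> assumption
    have h2le : 2 ≤ ∑ p ∈ N.primeFactors, ∑ i ∈ Finset.range (N.factorization p),
        ((if (N.factorization p).testBit i then p ^ 2 ^ i + 1 else 1).factorization q) := by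
      refine le_trans ?_ (Finset.sum_le_sum_of_subset hsub)
      rw [Finset.sum_insert (by simpa using hne), Finset.sum_singleton]
      have g1 := inner_ge_one hq hb1 hd1
      have g2 := inner_ge_one hq hb2 hd2
      omega
    omega
  have huniqbit : ∀ p j1 j2, p ∈ N.primeFactors →
      (N.factorization p).testBit j1 → (N.factorization p).testBit j2 →
      q ∣ p ^ 2 ^ j1 + 1 → q ∣ p ^ 2 ^ j2 + 1 → j1 = j2 := by
    intro p j1 j2 hm hb1 hb2 hd1 hd2
    by_contra hne
    have h2le : 2 ≤ ∑ p ∈ N.primeFactors, ∑ i ∈ Finset.range (N.factorization p),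
        ((if (N.factorization p).testBit i then p ^ 2 ^ i + 1 else 1).factorization q) :=
      le_trans (inner_ge_two hq hne hb1 hb2 hd1 hd2)
        (Finset.single_le_sum (f := fun x => ∑ i ∈ Finset.range (N.factorization x),
          ((if (N.factorization x).testBit i then x ^ 2 ^ i + 1 else 1).factorization q))
          (fun _ _ => Nat.zero_le _) hm)
    omega
  -- the smallest prime factor of F
  set r := F.minFac with hrdef
  have hrp : r.Prime := Nat.minFac_prime (by omega)
  have hrF : r ∣ F := Nat.minFac_dvd F
  have hr2 : r ≠ 2 := r_ne_two hrF
  have hr3 : 3 ≤ r := by have := hrp.two_le; omega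
  have hrN : r ∣ N := hrF.trans hFN
  have hrmem : r ∈ N.primeFactors := Nat.mem_primeFactors.2 ⟨hrp, hrN, hN0⟩
  have her0 : N.factorization r ≠ 0 := by
    have := hrp.factorization_pos_of_dvd hN0 hrN; omega
  obtain ⟨j, hbj⟩ := Nat.exists_testBit_of_ne_zero her0
  have hqr : q ∣ r ^ 2 ^ j + 1 := key r j hrp hrF hbj
  -- the exponent of r in N is exactly 2 ^ j
  have her2 : N.factorization r = 2 ^ j := by
    apply Nat.eq_of_testBit_eq
    intro i
    rw [Nat.testBit_two_pow]
    by_cases hij : j = i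
    · subst hij; simp [hbj]
    · have hfalse : (N.factorization r).testBit i = false := by
        by_contra h
        have h' : (N.factorization r).testBit i := by simpa using h
        exact hij (huniqbit r j i hrmem hbj h' hqr (key r i hrp hrF h'))
      simp [hfalse, hij]
  -- the factor r ^ 2 ^ j + 1 is 2 mod 4
  have hX4 : (r ^ 2 ^ j + 1) % 4 = 2 := by
    rcases Nat.eq_zero_or_pos j with rfl | hj
    · have := r_one_mod_four hj0ne hrp hrF
      rw [pow_zero, pow_one]
      omega
    · set t := r ^ 2 ^ (j - 1) with htdef
      have ht3 : 3 ≤ t := le_trans hr3 (Nat.le_self_pow (by positivity) r)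
      have htodd : t % 2 = 1 := by
        have hndvd : ¬ 2 ∣ t := by
          intro h
          have h2r : (2:ℕ) ∣ r := Nat.Prime.dvd_of_dvd_pow Nat.prime_two (htdef ▸ h)
          rcases hrp.eq_one_or_self_of_dvd 2 h2r with h' | h' <;> omega
        omega
      have htsq : r ^ 2 ^ j = t * t := by
        rw [htdef, ← pow_add]
        congr 1
        have h2 : 2 ^ j = 2 ^ (j - 1) * 2 := by
          rw [← pow_succ]
          congr 1
          omega
        omega
      obtain ⟨k, hk⟩ : ∃ k, t = 2 * k + 1 := ⟨t / 2, by omega⟩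
      have hexp : (2 * k + 1) * (2 * k + 1) = 4 * (k * k + k) + 1 := by ring
      rw [htsq, hk]
      omega
  -- the factor is exactly 2 * q
  have htermr : r ^ 2 ^ j + 1 ∣ 2 ^ f * q := by
    rw [← H1]
    exact (dvd_g hbj).trans (g_dvd_infsigma hrmem)
  have hqr' := hqr
  obtain ⟨c, hc⟩ := hqr'
  have hcd : c ∣ 2 ^ f := by
    have h1 : c * q ∣ 2 ^ f * q := by
      rw [mul_comm c q, ← hc]
      exact htermr
    exact (Nat.mul_dvd_mul_iff_right hq.pos).1 h1
  obtain ⟨u, _, hu⟩ := (Nat.dvd_prime_pow Nat.prime_two).1 hcd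
  have h2q : r ^ 2 ^ j + 1 = 2 * q := by
    subst hu
    rcases Nat.lt_or_ge u 2 with hu2 | hu2
    · interval_cases u
      · rw [pow_zero, mul_one] at hc
        omega
      · rw [pow_one] at hc
        omega
    · exfalso
      have h4 : (4:ℕ) ∣ r ^ 2 ^ j + 1 := by
        rw [hc]
        refine Dvd.dvd.mul_left ?_ q
        calc (4:ℕ) = 2 ^ 2 := by norm_num
          _ ∣ 2 ^ u := pow_dvd_pow 2 hu2
      omega
  -- r does not divide q + 1
  have hrq1 : ¬ r ∣ (q + 1) := by
    intro h
    have h2 : r ∣ 2 * (q + 1) := Dvd.dvd.mul_left h 2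
    have he : 2 * (q + 1) = r ^ 2 ^ j + 3 := by omega
    have h3 : r ∣ r ^ 2 ^ j := dvd_pow_self r (by positivity)
    have h4 : r ∣ 3 := by
      have h5 := Nat.dvd_sub (he ▸ h2) h3
      rw [Nat.add_sub_cancel_left] at h5
      exact h5
    have hr3' : r = 3 := by
      have := Nat.le_of_dvd (by norm_num) h4
      omega
    have hF3 : F % 3 = 2 := by
      have h2j : 2 ^ j0 = 2 * 2 ^ (j0 - 1) := by
        rw [← pow_succ']
        congr 1
        omega
      have h4p : (2:ℕ) ^ 2 ^ j0 = 4 ^ 2 ^ (j0 - 1) := by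
        rw [h2j, pow_mul]
        norm_num
      have h4m : (4:ℕ) ^ 2 ^ (j0 - 1) % 3 = 1 := by
        rw [Nat.pow_mod]
        norm_num
      rw [hFdef, h4p]
      omega
    have h3F : (3:ℕ) ∣ F := hr3' ▸ hrF
    omega
  -- every prime dividing F equals r
  have hFprime : ∀ {d : ℕ}, d.Prime → d ∣ F → d = r := by
    intro d hd hdF
    have hdN : d ∣ N := hdF.trans hFN
    have hdmem : d ∈ N.primeFactors := Nat.mem_primeFactors.2 ⟨hd, hdN, hN0⟩
    have hd0 : N.factorization d ≠ 0 := by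
      have := hd.factorization_pos_of_dvd hN0 hdN; omega
    obtain ⟨jd, hbd⟩ := Nat.exists_testBit_of_ne_zero hd0
    exact huniq2 d r jd j hdmem hrmem hbd hbj (key d jd hd hdF hbd) hqr
  have hFpow : F = r ^ F.primeFactorsList.length :=
    Nat.eq_prime_pow_of_unique_prime_dvd (by omega) hFprime
  have hL : F.factorization r = F.primeFactorsList.length := by
    conv_lhs => rw [hFpow]
    rw [hrp.factorization_pow]
    simp
  -- r-valuation of A
  have hvA : A.factorization r = F.factorization r := by
    rw [hA, vq_g r 2 f]
    have hj0f : j0 ∈ Finset.range f := Finset.mem_range.2 (testBit_lt hbit0)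
    rw [Finset.sum_eq_single_of_mem j0 hj0f ?_]
    · simp [hbit0, hFdef]
    · intro jb _ hne
      by_cases hb : f.testBit jb
      · rw [if_pos hb]
        exact Nat.factorization_eq_zero_of_not_dvd
          (fun h => fermat_not_dvd hrp hne hrF h)
      · simp [hb]
  -- r-valuation of N
  have hvN : N.factorization r = A.factorization r := by
    have hmul : (2 * N).factorization r = (A * (q + 1)).factorization r := by rw [h2N]
    rw [Nat.factorization_mul (by norm_num) hN0,
      Nat.factorization_mul hApos.ne' (by omega),
      Finsupp.add_apply, Finsupp.add_apply] at hmul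
    have e2 : (2:ℕ).factorization r = 0 := Nat.factorization_eq_zero_of_not_dvd
      (fun h => by have := Nat.le_of_dvd (by norm_num) h; omega)
    have eq1 : (q + 1).factorization r = 0 := Nat.factorization_eq_zero_of_not_dvd hrq1
    omega
  -- hence F = r ^ 2 ^ j and 2 q = F + 1
  have hFr : F = r ^ 2 ^ j := by
    calc F = r ^ F.primeFactorsList.length := hFpow
      _ = r ^ 2 ^ j := by rw [← hL, ← hvA, ← hvN, her2]
  have hqF : 2 * q = F + 1 := by rw [hFr]; exact h2q.symm
  -- q = 2 ^ (2 ^ j0 - 1) + 1 and 3 ∣ q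
  have hone : 1 ≤ (2:ℕ) ^ j0 := Nat.one_le_two_pow
  have hsplit2 : (2:ℕ) ^ 2 ^ j0 = 2 * 2 ^ (2 ^ j0 - 1) := by
    rw [← pow_succ']
    congr 1
    omega
  have hqe : q = 2 ^ (2 ^ j0 - 1) + 1 := by omega
  have hq3 : q = 3 := by
    obtain ⟨m, hm⟩ : ∃ m, 2 ^ j0 - 1 = 2 * m + 1 := by
      have h2j : 2 ^ j0 = 2 * 2 ^ (j0 - 1) := by
        rw [← pow_succ']
        congr 1
        omega
      exact ⟨(2 ^ j0 - 1) / 2, by omega⟩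
    have hpe : (2:ℕ) ^ (2 * m + 1) = 2 * 4 ^ m := by
      rw [pow_succ', pow_mul]
      norm_num
    have h4m : (4:ℕ) ^ m % 3 = 1 := by
      rw [Nat.pow_mod]
      norm_num
    have hqm : q % 3 = 0 := by
      rw [hqe, hm, hpe]
      omega
    have h3q : (3:ℕ) ∣ q := by omega
    rcases hq.eq_one_or_self_of_dvd 3 h3q with h | h <;> omega
  -- conclusion: N = 2 * A, so the prime 2 also contributes a factor divisible by q
  have hNA : N = 2 * A := by rw [hq3] at h2N; omega
  have hv2N : N.factorization 2 = 1 := by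
    rw [hNA, Nat.factorization_mul (by norm_num) hApos.ne', Finsupp.add_apply]
    have e1 : (2:ℕ).factorization 2 = 1 := Nat.Prime.factorization_self Nat.prime_two
    have e2 : A.factorization 2 = 0 := Nat.factorization_eq_zero_of_not_dvd hAodd
    omega
  have h2mem : 2 ∈ N.primeFactors := Nat.mem_primeFactors.2 ⟨Nat.prime_two, ⟨A, hNA⟩, hN0⟩
  have hb2 : (N.factorization 2).testBit 0 := by rw [hv2N]; decide
  have hq_dvd_3 : q ∣ 2 ^ 2 ^ 0 + 1 := by rw [hq3]; norm_num
  have hfinal := huniq2 2 r 0 j h2mem hrmem hb2 hbj hq_dvd_3 hqr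
  exact hr2 hfinal.symm
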